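/- Let E be a row-finite graph. A ℤ-order-ideal I of M_E^{gr} is prime (for all ℤ-order-ideals N₁, N₂: N₁ ∩ N₂ ⊆ I implies N₁ ⊆ I or N₂ ⊆ I) if and only if for all a, b ∉ I there exist c ∉ I and integers n, m with ^n c ≤ a and ^m c ≤ b. -/

import Mathlib

set_option linter.unusedSectionVars false

/-- The algebraic preorder on a commutative monoid: `a ≤ b` iff `b = a + c` for some `c`. -/
def algLE {M : Type*} [AddCommMonoid M] (a b : M) : Prop := ∃ c, b = a + c

/-- A row-finite directed graph: vertices `V`, edges `Ed`, source `s`, range `r`,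
and for each vertex the (finite) set of edges it emits. -/
structure RFGraph (V : Type) (Ed : Type) where
  s : Ed → V
  r : Ed → V
  emit : V → Finset Ed
  mem_emit : ∀ e v, e ∈ emit v ↔ s e = v

namespace RFGraph

variable {V Ed : Type} [DecidableEq V] (G : RFGraph V Ed)

/-- The one-step rewriting relation `→₁` on the free commutative monoid `Multiset V`:
replace one occurrence of a non-sink vertex `v` by the sum of ranges of edges emitted by `v`. -/
def Step1 (a b : Multiset V) : Prop :=
  ∃ v : V, v ∈ a ∧ G.emit v ≠ ∅ ∧ b = a.erase v + (G.emit v).val.map G.r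

/-- The reflexive-transitive closure `→` of `→₁`. -/
def Step : Multiset V → Multiset V → Prop := Relation.ReflTransGen G.Step1

/-- The congruence on the free commutative monoid generated by `→₁`. -/
def gcon : AddCon (Multiset V) := addConGen G.Step1

/-- The graph monoid `M_E`. -/
def GM := G.gcon.Quotient

instance : AddCommMonoid G.GM := inferInstanceAs (AddCommMonoid G.gcon.Quotient)

/-- One-step rewriting for the talented monoid: replace `v(i)` by `Σ_{e ∈ s⁻¹(v)} r(e)(i+1)`. -/
def TStep1 (a b : Multiset (V × ℤ)) : Prop :=
  ∃ (v : V) (i : ℤ), (v, i) ∈ a ∧ G.emit v ≠ ∅ ∧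
    b = a.erase (v, i) + (G.emit v).val.map (fun e => (G.r e, i + 1))

/-- The congruence generated by the talented one-step relation. -/
def tcon : AddCon (Multiset (V × ℤ)) := addConGen G.TStep1

/-- The talented monoid `M_E^{gr}`. -/
def TM := G.tcon.Quotient

instance : AddCommMonoid G.TM := inferInstanceAs (AddCommMonoid G.tcon.Quotient)

/-- The generator `v(i)` of the talented monoid. -/
def tgen (v : V) (i : ℤ) : G.TM := G.tcon.mk' {(v, i)}

/-- The shift `v(i) ↦ v(i+n)` on the free commutative monoid `Multiset (V × ℤ)`. -/
def shiftMul (n : ℤ) : Multiset (V × ℤ) →+ Multiset (V × ℤ) where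
  toFun a := a.map fun p => (p.1, p.2 + n)
  map_zero' := rfl
  map_add' a b := Multiset.map_add (fun p => (p.1, p.2 + n)) a b

lemma shift_inj (n : ℤ) : Function.Injective (fun p : V × ℤ => (p.1, p.2 + n)) := by
  rintro ⟨a, b⟩ ⟨c, d⟩ h
  simp only [Prod.mk.injEq] at h
  exact Prod.ext h.1 (by omega)

lemma tstep1_shift (n : ℤ) {a b : Multiset (V × ℤ)} (h : G.TStep1 a b) :
    G.TStep1 (shiftMul n a) (shiftMul n b) := by
  obtain ⟨v, i, hv, hne, rfl⟩ := h
  refine ⟨v, i + n, Multiset.mem_map.2 ⟨(v, i), hv, rfl⟩, hne, ?_⟩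
  show Multiset.map _ _ = _
  rw [Multiset.map_add]
  congr 1
  · exact (Multiset.map_erase _ (shift_inj n) (v, i) a)
  · rw [Multiset.map_map]
    congr 1
    funext e
    simp only [Function.comp_apply]
    congr 1
    omega

lemma tcon_shift (n : ℤ) {a b : Multiset (V × ℤ)} (h : G.tcon a b) :
    G.tcon (shiftMul n a) (shiftMul n b) := by
  have hle : addConGen G.TStep1 ≤
      { r := fun a b => G.tcon (shiftMul n a) (shiftMul n b)
        iseqv := ⟨fun _ => G.tcon.refl _, fun h => G.tcon.symm h,
          fun h₁ h₂ => G.tcon.trans h₁ h₂⟩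
        add' := fun h₁ h₂ => by
          simpa only [map_add] using G.tcon.add h₁ h₂ } := by
    refine AddCon.addConGen_le.2 ?_
    intro x y hxy
    exact AddConGen.Rel.of _ _ (G.tstep1_shift n hxy)
  exact hle h

/-- The `ℤ`-action on the talented monoid, `ⁿ(v(i)) = v(i+n)`. -/
def tshift (n : ℤ) : G.TM →+ G.TM :=
  G.tcon.lift (G.tcon.mk'.comp (shiftMul n)) (by
    intro a b h
    show G.tcon.mk' (shiftMul n a) = G.tcon.mk' (shiftMul n b)
    exact (AddCon.eq _).2 (G.tcon_shift n h))

/-- Reachability: there is a (possibly trivial) path from `u` to `v`. -/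
def Reaches (u v : V) : Prop :=
  Relation.ReflTransGen (fun a b => ∃ e : Ed, G.s e = a ∧ G.r e = b) u v

/-- A cycle: a nonempty path of edges, closed up, with distinct source vertices. -/
def IsCycle (p : List Ed) : Prop :=
  ∃ h : p ≠ [], List.Chain' (fun e f => G.r e = G.s f) p ∧
    G.r (p.getLast h) = G.s (p.head h) ∧ (p.map G.s).Nodup

/-- The cycle `p` has an exit: some vertex on it emits an edge not on the cycle. -/
def HasExit (p : List Ed) : Prop :=
  ∃ e : Ed, (∃ f ∈ p, G.s e = G.s f) ∧ e ∉ p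

/-- The cycle `p` has no exit: every vertex on it emits exactly its cycle edge. -/
def NoExit (p : List Ed) : Prop :=
  ∀ e ∈ p, G.emit (G.s e) = {e}

/-- `ℤ`-order-ideals of the talented monoid. -/
def IsOrderIdeal (I : Set G.TM) : Prop :=
  (0 : G.TM) ∈ I ∧ (∀ a b : G.TM, a ∈ I → b ∈ I → a + b ∈ I) ∧
    (∀ (n : ℤ) (a : G.TM), a ∈ I → G.tshift n a ∈ I) ∧
    (∀ a b : G.TM, algLE a b → b ∈ I → a ∈ I)

/-- The smallest `ℤ`-order-ideal of `M_E^{gr}` containing `v(0)`. -/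
def genIdeal (v : V) : Set G.TM :=
  ⋂₀ {I : Set G.TM | G.IsOrderIdeal I ∧ G.tgen v 0 ∈ I}

/-- Minimality in the talented monoid: `0 ≠ b ≤ a` implies `a ≤ b`. -/
def TMin (a : G.TM) : Prop := ∀ b : G.TM, b ≠ 0 → algLE b a → algLE a b

/-- The covering graph `\bar E`. -/
def cover : RFGraph (V × ℤ) (Ed × ℤ) where
  s p := (G.s p.1, p.2)
  r p := (G.r p.1, p.2 + 1)
  emit p := (G.emit p.1).map ⟨fun e => (e, p.2), fun a b h => by
    simpa using congrArg Prod.fst h⟩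
  mem_emit := by
    rintro ⟨e, n⟩ ⟨v, m⟩
    simp only [Finset.mem_map, Function.Embedding.coeFn_mk, Prod.mk.injEq, G.mem_emit]
    constructor
    · rintro ⟨a, ha, rfl, rfl⟩; exact ⟨ha, rfl⟩
    · rintro ⟨rfl, rfl⟩; exact ⟨e, by simp, rfl⟩

/-- The set of vertices on a cycle. -/
def cycVerts (p : List Ed) : Set V := {v | ∃ e ∈ p, G.s e = v}

end RFGraph

namespace RFGraph

variable {V Ed : Type} [DecidableEq V] (G : RFGraph V Ed)

/-- Reflexive-transitive closure of the talented one-step relation. -/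
def TStepR : Multiset (V × ℤ) → Multiset (V × ℤ) → Prop := Relation.ReflTransGen G.TStep1

lemma tstep1_add_right {a b : Multiset (V × ℤ)} (t : Multiset (V × ℤ)) (h : G.TStep1 a b) :
    G.TStep1 (a + t) (b + t) := by
  obtain ⟨v, i, hv, hne, rfl⟩ := h
  refine ⟨v, i, Multiset.mem_add.2 (Or.inl hv), hne, ?_⟩
  rw [Multiset.erase_add_left_pos t hv, add_right_comm]

lemma tstep1_add_left {a b : Multiset (V × ℤ)} (t : Multiset (V × ℤ)) (h : G.TStep1 a b) :
    G.TStep1 (t + a) (t + b) := by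
  rw [add_comm t a, add_comm t b]; exact G.tstep1_add_right t h

lemma tstepR_add_right {a b : Multiset (V × ℤ)} (t : Multiset (V × ℤ)) (h : G.TStepR a b) :
    G.TStepR (a + t) (b + t) :=
  Relation.ReflTransGen.lift (· + t) (fun _ _ h => G.tstep1_add_right t h) _ _ h

lemma tstepR_add {a b c d : Multiset (V × ℤ)} (h1 : G.TStepR a b) (h2 : G.TStepR c d) :
    G.TStepR (a + c) (b + d) := by
  refine (G.tstepR_add_right c h1).trans ?_
  exact Relation.ReflTransGen.lift (b + ·) (fun _ _ h => G.tstep1_add_left b h) _ _ h2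

lemma tstep1_diamond {a b c : Multiset (V × ℤ)} (hb : G.TStep1 a b) (hc : G.TStep1 a c) :
    ∃ d, Relation.ReflGen G.TStep1 b d ∧ Relation.ReflTransGen G.TStep1 c d := by
  obtain ⟨v, i, hv, hvne, rfl⟩ := hb
  obtain ⟨w, j, hw, hwne, rfl⟩ := hc
  by_cases hvw : (v, i) = (w, j)
  · rw [Prod.mk.injEq] at hvw
    obtain ⟨rfl, rfl⟩ := hvw
    exact ⟨_, Relation.ReflGen.refl, Relation.ReflTransGen.refl⟩
  · have hw' : (w, j) ∈ a.erase (v, i) :=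
      (Multiset.mem_erase_of_ne (fun h => hvw h.symm)).2 hw
    have hv' : (v, i) ∈ a.erase (w, j) := (Multiset.mem_erase_of_ne hvw).2 hv
    refine ⟨(a.erase (v, i)).erase (w, j) + (G.emit v).val.map (fun e => (G.r e, i + 1))
      + (G.emit w).val.map (fun e => (G.r e, j + 1)), ?_, ?_⟩
    · refine Relation.ReflGen.single ⟨w, j, Multiset.mem_add.2 (Or.inl hw'), hwne, ?_⟩
      rw [Multiset.erase_add_left_pos _ hw']
    · refine Relation.ReflTransGen.single ⟨v, i, Multiset.mem_add.2 (Or.inl hv'), hvne, ?_⟩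
      rw [Multiset.erase_add_left_pos _ hv', Multiset.erase_comm, add_right_comm]

lemma tstepR_confluent {a b c : Multiset (V × ℤ)} (h1 : G.TStepR a b) (h2 : G.TStepR a c) :
    ∃ d, G.TStepR b d ∧ G.TStepR c d :=
  Relation.church_rosser (fun _ _ _ hb hc => G.tstep1_diamond hb hc) h1 h2

lemma tcon_of_tstepR {a b : Multiset (V × ℤ)} (h : G.TStepR a b) : G.tcon a b := by
  induction h with
  | refl => exact G.tcon.refl _
  | tail _ h2 ih => exact G.tcon.trans ih (AddConGen.Rel.of _ _ h2)

lemma tcon_join {a b : Multiset (V × ℤ)} (h : G.tcon a b) :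
    ∃ d, G.TStepR a d ∧ G.TStepR b d := by
  have hle : addConGen G.TStep1 ≤
      { r := fun a b => ∃ d, G.TStepR a d ∧ G.TStepR b d
        iseqv := by
          refine ⟨fun x => ⟨x, .refl, .refl⟩, ?_, ?_⟩
          · rintro x y ⟨d, h1, h2⟩; exact ⟨d, h2, h1⟩
          · rintro x y z ⟨d, h1, h2⟩ ⟨e, h3, h4⟩
            obtain ⟨f, hf1, hf2⟩ := G.tstepR_confluent h2 h3
            exact ⟨f, h1.trans hf1, h4.trans hf2⟩
        add' := by
          rintro w x y z ⟨d, h1, h2⟩ ⟨e, h3, h4⟩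
          exact ⟨d + e, G.tstepR_add h1 h3, G.tstepR_add h2 h4⟩ } := by
    refine AddCon.addConGen_le.2 fun x y hxy => ⟨y, Relation.ReflTransGen.single hxy, .refl⟩
  exact hle h

lemma tstepR_decomp {a w : Multiset (V × ℤ)} (h : G.TStepR a w) :
    ∀ x y, a = x + y → ∃ w₁ w₂, w = w₁ + w₂ ∧ G.TStepR x w₁ ∧ G.TStepR y w₂ := by
  induction h using Relation.ReflTransGen.head_induction_on with
  | refl => exact fun x y h => ⟨x, y, h, .refl, .refl⟩
  | head hstep _ ih =>
    rintro x y rfl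
    obtain ⟨v, i, hv, hne, rfl⟩ := hstep
    rcases Multiset.mem_add.1 hv with hvx | hvy
    · obtain ⟨w₁, w₂, rfl, h1, h2⟩ :=
        ih (x.erase (v, i) + (G.emit v).val.map (fun e => (G.r e, i + 1))) y
          (by rw [Multiset.erase_add_left_pos _ hvx, add_right_comm])
      exact ⟨w₁, w₂, rfl, Relation.ReflTransGen.head ⟨v, i, hvx, hne, rfl⟩ h1, h2⟩
    · obtain ⟨w₁, w₂, rfl, h1, h2⟩ :=
        ih x (y.erase (v, i) + (G.emit v).val.map (fun e => (G.r e, i + 1)))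
          (by rw [Multiset.erase_add_right_pos _ hvy, add_assoc])
      exact ⟨w₁, w₂, rfl, h1, Relation.ReflTransGen.head ⟨v, i, hvy, hne, rfl⟩ h2⟩

end RFGraph

section algLE

variable {M N : Type*} [AddCommMonoid M] [AddCommMonoid N]

lemma algLE_refl (a : M) : algLE a a := ⟨0, (add_zero a).symm⟩

lemma algLE_trans {a b c : M} (h1 : algLE a b) (h2 : algLE b c) : algLE a c := by
  obtain ⟨x, rfl⟩ := h1; obtain ⟨y, rfl⟩ := h2; exact ⟨x + y, add_assoc a x y⟩

lemma algLE_add {a b c d : M} (h1 : algLE a b) (h2 : algLE c d) : algLE (a + c) (b + d) := by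
  obtain ⟨x, rfl⟩ := h1; obtain ⟨y, rfl⟩ := h2
  exact ⟨x + y, (add_add_add_comm a x c y).symm ▸ rfl⟩

lemma algLE_zero (a : M) : algLE 0 a := ⟨a, (zero_add a).symm⟩

lemma algLE_map (f : M →+ N) {a b : M} (h : algLE a b) : algLE (f a) (f b) := by
  obtain ⟨x, rfl⟩ := h; exact ⟨f x, by rw [map_add]⟩

lemma algLE_left (a b : M) : algLE a (a + b) := ⟨b, rfl⟩

lemma algLE_right (a b : M) : algLE b (a + b) := ⟨a, add_comm a b⟩

end algLE

namespace RFGraph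

variable {V Ed : Type} [DecidableEq V] (G : RFGraph V Ed)

lemma tshift_mk (n : ℤ) (a : Multiset (V × ℤ)) :
    G.tshift n (G.tcon.mk' a) = G.tcon.mk' (shiftMul n a) :=
  AddCon.lift_mk' _ _

lemma shiftMul_shiftMul (m n : ℤ) (a : Multiset (V × ℤ)) :
    shiftMul (V := V) m (shiftMul n a) = shiftMul (n + m) a := by
  show Multiset.map _ (Multiset.map _ a) = Multiset.map _ a
  rw [Multiset.map_map]
  refine Multiset.map_congr rfl fun p _ => ?_
  simp [add_assoc]

lemma tshift_tshift (m n : ℤ) (x : G.TM) :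
    G.tshift m (G.tshift n x) = G.tshift (n + m) x := by
  obtain ⟨a, rfl⟩ := AddCon.mk'_surjective x
  rw [G.tshift_mk, G.tshift_mk, G.tshift_mk, shiftMul_shiftMul]

lemma tshift_zero (x : G.TM) : G.tshift 0 x = x := by
  obtain ⟨a, rfl⟩ := AddCon.mk'_surjective x
  rw [G.tshift_mk]
  congr 1
  show Multiset.map _ a = a
  have : (fun p : V × ℤ => (p.1, p.2 + 0)) = id := by funext p; simp
  rw [this, Multiset.map_id]

lemma tshift_neg_cancel {n : ℤ} {x y : G.TM} (h : algLE x (G.tshift n y)) :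
    algLE (G.tshift (-n) x) y := by
  have := algLE_map (G.tshift (-n)) h
  rwa [G.tshift_tshift, add_neg_cancel, G.tshift_zero] at this

lemma mk_eq_of_tstepR {a b : Multiset (V × ℤ)} (h : G.TStepR a b) :
    G.tcon.mk' a = G.tcon.mk' b :=
  (AddCon.eq _).2 (G.tcon_of_tstepR h)

lemma algLE_mk_of_le {a b : Multiset (V × ℤ)} (h : a ≤ b) :
    algLE (G.tcon.mk' a) (G.tcon.mk' b) := by
  obtain ⟨u, rfl⟩ := Multiset.le_iff_exists_add.1 h
  exact ⟨G.tcon.mk' u, by rw [← map_add]⟩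

lemma mset_split {α : Type*} [DecidableEq α] {s t u : Multiset α} (h : s ≤ t + u) :
    ∃ t' u', t' ≤ t ∧ u' ≤ u ∧ s = t' + u' := by
  refine ⟨s ∩ t, s - t, Multiset.inter_le_right, ?_, ?_⟩
  · rw [Multiset.le_iff_count]
    intro a
    have := Multiset.le_iff_count.1 h a
    rw [Multiset.count_add] at this
    rw [Multiset.count_sub]
    omega
  · ext a
    have := Multiset.le_iff_count.1 h a
    rw [Multiset.count_add] at this
    rw [Multiset.count_add, Multiset.count_inter, Multiset.count_sub]
    omega

/-- Riesz decomposition in the talented monoid. -/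
lemma riesz {p q r : G.TM} (h : algLE p (q + r)) :
    ∃ p₁ p₂, p = p₁ + p₂ ∧ algLE p₁ q ∧ algLE p₂ r := by
  obtain ⟨c, rfl⟩ := AddCon.mk'_surjective p
  obtain ⟨x, rfl⟩ := AddCon.mk'_surjective q
  obtain ⟨y, rfl⟩ := AddCon.mk'_surjective r
  obtain ⟨z, hz⟩ := h
  obtain ⟨d, rfl⟩ := AddCon.mk'_surjective z
  have hcon : G.tcon (c + d) (x + y) := (AddCon.eq _).1
    (show G.tcon.mk' (c + d) = G.tcon.mk' (x + y) by rw [map_add, map_add]; exact hz.symm)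
  obtain ⟨w, hw1, hw2⟩ := G.tcon_join hcon
  obtain ⟨wc, wd, rfl, hwc, _⟩ := G.tstepR_decomp hw1 c d rfl
  obtain ⟨w1, w2, heq, hw1x, hw2y⟩ := G.tstepR_decomp hw2 x y rfl
  have hle : wc ≤ w1 + w2 := heq ▸ Multiset.le_add_right _ _
  obtain ⟨u1, u2, hu1, hu2, rfl⟩ := mset_split hle
  refine ⟨G.tcon.mk' u1, G.tcon.mk' u2, ?_, ?_, ?_⟩
  · rw [G.mk_eq_of_tstepR hwc]; exact map_add _ _ _
  · rw [G.mk_eq_of_tstepR hw1x]; exact G.algLE_mk_of_le hu1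
  · rw [G.mk_eq_of_tstepR hw2y]; exact G.algLE_mk_of_le hu2

end RFGraph

namespace RFGraph

variable {V Ed : Type} [DecidableEq V] (G : RFGraph V Ed)

/-- The `ℤ`-order-ideal generated by `I` and one element `a`. -/
def genJ (I : Set G.TM) (a : G.TM) : Set G.TM :=
  {x | ∃ y ∈ I, ∃ s : Multiset ℤ, algLE x (y + (s.map (fun n => G.tshift n a)).sum)}

lemma mem_genJ_self (I : Set G.TM) (hI : G.IsOrderIdeal I) (a : G.TM) : a ∈ G.genJ I a := by
  refine ⟨0, hI.1, {0}, ?_⟩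
  rw [Multiset.map_singleton, Multiset.sum_singleton, G.tshift_zero, zero_add]
  exact algLE_refl a

lemma genJ_ideal (I : Set G.TM) (hI : G.IsOrderIdeal I) (a : G.TM) :
    G.IsOrderIdeal (G.genJ I a) := by
  refine ⟨⟨0, hI.1, 0, by simpa using algLE_zero _⟩, ?_, ?_, ?_⟩
  · rintro x₁ x₂ ⟨y₁, hy₁, s₁, h₁⟩ ⟨y₂, hy₂, s₂, h₂⟩
    refine ⟨y₁ + y₂, hI.2.1 _ _ hy₁ hy₂, s₁ + s₂, ?_⟩
    rw [Multiset.map_add, Multiset.sum_add, add_add_add_comm]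
    exact algLE_add h₁ h₂
  · rintro k x ⟨y, hy, s, h⟩
    refine ⟨G.tshift k y, hI.2.2.1 k y hy, s.map (· + k), ?_⟩
    have hT : G.tshift k ((s.map (fun n => G.tshift n a)).sum)
        = (((s.map (· + k)).map (fun n => G.tshift n a))).sum := by
      rw [map_multiset_sum, Multiset.map_map, Multiset.map_map]
      congr 1
      refine Multiset.map_congr rfl fun n _ => ?_
      show G.tshift k (G.tshift n a) = G.tshift (n + k) a
      exact G.tshift_tshift k n a
    have := algLE_map (G.tshift k) h
    rw [map_add, hT] at this
    exact this
  · rintro x x' hxx' ⟨y, hy, s, h⟩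
    exact ⟨y, hy, s, algLE_trans hxx' h⟩

end RFGraph

namespace RFGraph

variable {V Ed : Type} [DecidableEq V] {G : RFGraph V Ed}

/-- Extraction: from `c ∉ I` below a sum of shifts of `a`, extract a summand not in `I`. -/
lemma extract_sum {I : Set G.TM} (hI : G.IsOrderIdeal I) (a : G.TM) (s : Multiset ℤ) :
    ∀ c : G.TM, c ∉ I → algLE c ((s.map (fun n => G.tshift n a)).sum) →
      ∃ d, d ∉ I ∧ algLE d c ∧ ∃ n, algLE (G.tshift n d) a := by
  induction s using Multiset.induction with
  | empty =>
    intro c hc hle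
    exact absurd (hI.2.2.2 c 0 (by simpa using hle) hI.1) hc
  | cons n s ih =>
    intro c hc hle
    rw [Multiset.map_cons, Multiset.sum_cons] at hle
    obtain ⟨u, w, rfl, hu, hw⟩ := G.riesz hle
    by_cases hui : u ∈ I
    · have hwI : w ∉ I := fun hwi => hc (hI.2.1 _ _ hui hwi)
      obtain ⟨d, hd, hdw, m, hm⟩ := ih w hwI hw
      exact ⟨d, hd, algLE_trans hdw (algLE_right u w), m, hm⟩
    · exact ⟨u, hui, algLE_left u w, -n, G.tshift_neg_cancel hu⟩

/-- Extraction from membership in the generated ideal. -/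
lemma extract_genJ {I : Set G.TM} (hI : G.IsOrderIdeal I) {a c y : G.TM} {s : Multiset ℤ}
    (hc : c ∉ I) (hy : y ∈ I)
    (hle : algLE c (y + (s.map (fun n => G.tshift n a)).sum)) :
    ∃ d, d ∉ I ∧ algLE d c ∧ ∃ n, algLE (G.tshift n d) a := by
  obtain ⟨c₀, c₁, rfl, h₀, h₁⟩ := G.riesz hle
  have hc₀ : c₀ ∈ I := hI.2.2.2 c₀ y h₀ hy
  have hc₁ : c₁ ∉ I := fun h => hc (hI.2.1 _ _ hc₀ h)
  obtain ⟨d, hd, hdc, n, hn⟩ := extract_sum hI a s c₁ hc₁ h₁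
  exact ⟨d, hd, algLE_trans hdc (algLE_right c₀ c₁), n, hn⟩

end RFGraph


/-- A `ℤ`-order-ideal `I` of `M_E^{gr}` is prime if and only if for all `a, b ∉ I`
there exist `c ∉ I` and integers `n, m` with `ⁿc ≤ a` and `ᵐc ≤ b`. -/
theorem prime_iff {V Ed : Type} [DecidableEq V] (G : RFGraph V Ed)
    (I : Set G.TM) (hI : G.IsOrderIdeal I) :
    (∀ N₁ N₂ : Set G.TM, G.IsOrderIdeal N₁ → G.IsOrderIdeal N₂ →
        N₁ ∩ N₂ ⊆ I → N₁ ⊆ I ∨ N₂ ⊆ I) ↔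
      ∀ a b : G.TM, a ∉ I → b ∉ I →
        ∃ c : G.TM, c ∉ I ∧ ∃ n m : ℤ,
          algLE (G.tshift n c) a ∧ algLE (G.tshift m c) b := by
  constructor
  · intro hp a b ha hb
    have hJa := G.genJ_ideal I hI a
    have hJb := G.genJ_ideal I hI b
    have hna : ¬ G.genJ I a ⊆ I := fun h => ha (h (G.mem_genJ_self I hI a))
    have hnb : ¬ G.genJ I b ⊆ I := fun h => hb (h (G.mem_genJ_self I hI b))
    have hns : ¬ (G.genJ I a ∩ G.genJ I b ⊆ I) := by
      intro h
      rcases hp _ _ hJa hJb h with h' | h'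
      exacts [hna h', hnb h']
    rw [Set.not_subset] at hns
    obtain ⟨c, ⟨hca, hcb⟩, hcI⟩ := hns
    obtain ⟨y, hy, s, hle⟩ := hca
    obtain ⟨d, hdI, hdc, n, hna'⟩ := RFGraph.extract_genJ hI hcI hy hle
    obtain ⟨y', hy', s', hle'⟩ := hcb
    obtain ⟨e, heI, hed, m, hmb⟩ := RFGraph.extract_genJ hI hdI hy' (algLE_trans hdc hle')
    refine ⟨e, heI, n, m, ?_, hmb⟩
    exact algLE_trans (algLE_map (G.tshift n) hed) hna'
  · intro h N₁ N₂ hN₁ hN₂ hsub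
    by_contra hcon
    push_neg at hcon
    obtain ⟨h1, h2⟩ := hcon
    obtain ⟨a, haN, haI⟩ := Set.not_subset.1 h1
    obtain ⟨b, hbN, hbI⟩ := Set.not_subset.1 h2
    obtain ⟨c, hcI, n, m, hca, hcb⟩ := h a b haI hbI
    have hc1 : c ∈ N₁ := by
      have := hN₁.2.2.1 (-n) _ (hN₁.2.2.2 _ a hca haN)
      rwa [G.tshift_tshift, add_neg_cancel, G.tshift_zero] at this
    have hc2 : c ∈ N₂ := by
      have := hN₂.2.2.1 (-m) _ (hN₂.2.2.2 _ b hcb hbN)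
      rwa [G.tshift_tshift, add_neg_cancel, G.tshift_zero] at this
    exact hcI (hsub ⟨hc1, hc2⟩)
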